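/- Let P be a parallelogram in ℝ² symmetric in the origin such that the translates P + z, z ∈ ℤ², tile ℝ² (their interiors are pairwise disjoint and their union is ℝ²). Then there exists a linear unimodular transformation U and a real number 0 ≤ α < 1 such that U(P) = (1/2)·conv{±(−α−1, 1), ±(−α+1, 1)}. -/

import Mathlib

open MeasureTheory Pointwise

noncomputable def dot2 (u x : ℝ × ℝ) : ℝ := u.1 * x.1 + u.2 * x.2

noncomputable def widthFn (K : Set (ℝ × ℝ)) (u : ℝ × ℝ) : ℝ :=
  sSup (dot2 u '' K) - sInf (dot2 u '' K)

noncomputable def latticeWidth (K : Set (ℝ × ℝ)) : ℝ :=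
  sInf {w | ∃ u : ℤ × ℤ, u ≠ 0 ∧ w = widthFn K ((u.1 : ℝ), (u.2 : ℝ))}

def IsLatticePoint (p : ℝ × ℝ) : Prop := ∃ z : ℤ × ℤ, p = ((z.1 : ℝ), (z.2 : ℝ))

def LatticeFree (K : Set (ℝ × ℝ)) : Prop := ∀ p ∈ interior K, ¬ IsLatticePoint p

def CentrallySymmetric (K : Set (ℝ × ℝ)) : Prop := ∃ c : ℝ × ℝ, ∀ x, x ∈ K ↔ (2 : ℝ) • c - x ∈ K

def Covers (t : ℝ) (K : Set (ℝ × ℝ)) : Prop :=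
  ∀ p : ℝ × ℝ, ∃ x ∈ K, ∃ z : ℤ × ℤ, p = t • x + ((z.1 : ℝ), (z.2 : ℝ))

noncomputable def mu2 (K : Set (ℝ × ℝ)) : ℝ := sInf {t : ℝ | 0 ≤ t ∧ Covers t K}

def MeetsAllLines (t : ℝ) (K : Set (ℝ × ℝ)) : Prop :=
  ∀ p v : ℝ × ℝ, v ≠ 0 → ∃ s : ℝ, ∃ x ∈ K, ∃ z : ℤ × ℤ,
    p + s • v = t • x + ((z.1 : ℝ), (z.2 : ℝ))

noncomputable def mu1 (K : Set (ℝ × ℝ)) : ℝ := sInf {t : ℝ | 0 ≤ t ∧ MeetsAllLines t K}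

namespace ParTile

noncomputable def Gf (g1 g2 : ℝ) (z : ℤ × ℤ) : ℝ := (z.1 : ℝ) * g1 + (z.2 : ℝ) * g2

lemma Gf_zero (g1 g2 : ℝ) : Gf g1 g2 0 = 0 := by simp [Gf]

lemma extract (g1 g2 h1 h2 : ℝ)
    (PACK : ∀ z : ℤ × ℤ, z ≠ 0 → 2 ≤ |Gf g1 g2 z| ∨ 2 ≤ |Gf h1 h2 z|)
    (COV : ∀ x y : ℝ, ∃ z : ℤ × ℤ, |x - Gf g1 g2 z| ≤ 1 ∧ |y - Gf h1 h2 z| ≤ 1)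
    (FIN : Set.Finite {z : ℤ × ℤ | |Gf g1 g2 z| ≤ 4 ∧ |Gf h1 h2 z| ≤ 4}) :
    ∃ e : ℤ × ℤ, Gf g1 g2 e = 2 ∧ |Gf h1 h2 e| ≤ 1 := by
  classical
  set T : Finset (ℤ × ℤ) :=
    FIN.toFinset.filter (fun z => 2 ≤ Gf g1 g2 z ∧ Gf g1 g2 z ≤ 7/2 ∧ |Gf h1 h2 z| ≤ 1) with hT
  have hmemT : ∀ z : ℤ × ℤ, 2 ≤ Gf g1 g2 z → Gf g1 g2 z ≤ 7/2 → |Gf h1 h2 z| ≤ 1 → z ∈ T := by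
    intro z h1 h2' h3
    rw [hT, Finset.mem_filter, Set.Finite.mem_toFinset]
    refine ⟨⟨?_, le_trans h3 (by norm_num)⟩, h1, h2', h3⟩
    rw [abs_le]; constructor <;> linarith
  have hTmem : ∀ z ∈ T, 2 ≤ Gf g1 g2 z ∧ Gf g1 g2 z ≤ 7/2 ∧ |Gf h1 h2 z| ≤ 1 := by
    intro z hz; rw [hT, Finset.mem_filter] at hz; exact hz.2
  obtain ⟨z0, hz01, hz02⟩ := COV (5/2) 0
  rw [abs_le] at hz01 hz02
  have hz0ne : z0 ≠ 0 := by
    intro h; rw [h, Gf_zero] at hz01; norm_num at hz01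
  have hz0G : 2 ≤ Gf g1 g2 z0 := by
    rcases PACK z0 hz0ne with h | h
    · rcases le_abs.1 h with h' | h'
      · exact h'
      · linarith [hz01.1, hz01.2]
    · rcases le_abs.1 h with h' | h' <;> linarith [hz02.1, hz02.2]
  have hz0T : z0 ∈ T := hmemT z0 hz0G (by linarith [hz01.1]) (by rw [abs_le]; constructor <;> linarith [hz02.1, hz02.2])
  obtain ⟨e, heT, hemin⟩ := Finset.exists_min_image T (Gf g1 g2) ⟨z0, hz0T⟩
  obtain ⟨he2, he72, heH⟩ := hTmem e heT
  refine ⟨e, ?_, heH⟩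
  by_contra hne
  have hgt : 2 < Gf g1 g2 e := lt_of_le_of_ne he2 (Ne.symm hne)
  set δ := (Gf g1 g2 e - 2)/2 with hδ
  have hδ0 : 0 < δ := by rw [hδ]; linarith
  have hδ34 : δ ≤ 3/4 := by rw [hδ]; linarith
  obtain ⟨z, hz1, hz2⟩ := COV (1 + δ) 0
  rw [abs_le] at hz1 hz2
  have hzne : z ≠ 0 := by
    intro h; rw [h, Gf_zero] at hz1; simp at hz1; linarith [hz1.2]
  have hzG : 2 ≤ Gf g1 g2 z := by
    rcases PACK z hzne with h | h
    · rcases le_abs.1 h with h' | h'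
      · exact h'
      · linarith [hz1.1, hz1.2]
    · rcases le_abs.1 h with h' | h' <;> linarith [hz2.1, hz2.2]
  have hzT : z ∈ T := hmemT z hzG (by linarith [hz1.1]) (by rw [abs_le]; constructor <;> linarith [hz2.1, hz2.2])
  have := hemin z hzT
  have : Gf g1 g2 z ≤ 2 + δ := by linarith [hz1.1]
  linarith [hemin z hzT]

lemma basis_of_ef (g1 g2 h1 h2 : ℝ) (e f : ℤ × ℤ)
    (PACK : ∀ z : ℤ × ℤ, z ≠ 0 → 2 ≤ |Gf g1 g2 z| ∨ 2 ≤ |Gf h1 h2 z|)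
    (hGe : Gf g1 g2 e = 2) (hHe : |Gf h1 h2 e| ≤ 1)
    (hHf : Gf h1 h2 f = 2) (hGf : |Gf g1 g2 f| ≤ 1) :
    ∀ z : ℤ × ℤ, ∃ m n : ℤ, (z.1 : ℝ) = m * e.1 + n * f.1 ∧ (z.2 : ℝ) = m * e.2 + n * f.2 := by
  intro z
  obtain ⟨hs1, hs2⟩ := abs_le.1 hHe
  obtain ⟨ht1, ht2⟩ := abs_le.1 hGf
  set s := Gf h1 h2 e with hs
  set t := Gf g1 g2 f with ht
  have hst : (0:ℝ) < 4 - s * t := by nlinarith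
  set A := Gf g1 g2 z with hA
  set B := Gf h1 h2 z with hB
  set c1 := (2*A - t*B)/(4 - s*t) with hc1
  set c2 := (2*B - s*A)/(4 - s*t) with hc2
  have key1 : 2*c1 + t*c2 = A := by rw [hc1, hc2, mul_div_assoc', mul_div_assoc', ← add_div, div_eq_iff hst.ne']; ring
  have key2 : s*c1 + 2*c2 = B := by rw [hc1, hc2]; field_simp; ring
  refine ⟨⌊c1 + 1/2⌋, ⌊c2 + 1/2⌋, ?_⟩
  set m := ⌊c1 + 1/2⌋ with hm
  set n := ⌊c2 + 1/2⌋ with hn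
  have hm1 : |c1 - m| ≤ 1/2 := by
    rw [abs_le]
    constructor
    · have := Int.floor_le (c1 + 1/2); linarith
    · have := Int.lt_floor_add_one (c1 + 1/2); linarith
  have hn1 : |c2 - n| ≤ 1/2 := by
    rw [abs_le]
    constructor
    · have := Int.floor_le (c2 + 1/2); linarith
    · have := Int.lt_floor_add_one (c2 + 1/2); linarith
  set w : ℤ × ℤ := (z.1 - m*e.1 - n*f.1, z.2 - m*e.2 - n*f.2) with hw
  have hGw : Gf g1 g2 w = 2*(c1 - m) + t*(c2 - n) := by
    have expand : Gf g1 g2 w = A - m * Gf g1 g2 e - n * Gf g1 g2 f := by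
      rw [hA]; simp only [Gf, hw]; push_cast; ring
    rw [expand, hGe, ← ht]
    linarith [key1]
  have hHw : Gf h1 h2 w = s*(c1 - m) + 2*(c2 - n) := by
    have expand : Gf h1 h2 w = B - m * Gf h1 h2 e - n * Gf h1 h2 f := by
      rw [hB]; simp only [Gf, hw]; push_cast; ring
    rw [expand, hHf, ← hs]
    linarith [key2]
  have habs1 : |Gf g1 g2 w| < 2 := by
    rw [hGw]
    calc |2*(c1 - m) + t*(c2 - n)| ≤ |2*(c1-m)| + |t*(c2-n)| := abs_add_le _ _
      _ = 2*|c1-m| + |t| * |c2-n| := by rw [abs_mul, abs_mul]; norm_num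
      _ ≤ 2*(1/2) + 1*(1/2) := by
          have h1 : |t| ≤ 1 := abs_le.2 ⟨ht1, ht2⟩
          have h2 : (0:ℝ) ≤ |c2 - n| := abs_nonneg _
          have h3 : (0:ℝ) ≤ |t| := abs_nonneg _
          nlinarith
      _ < 2 := by norm_num
  have habs2 : |Gf h1 h2 w| < 2 := by
    rw [hHw]
    calc |s*(c1 - m) + 2*(c2 - n)| ≤ |s*(c1-m)| + |2*(c2-n)| := abs_add_le _ _
      _ = |s| * |c1-m| + 2*|c2-n| := by rw [abs_mul, abs_mul]; norm_num
      _ ≤ 1*(1/2) + 2*(1/2) := by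
          have h1 : |s| ≤ 1 := abs_le.2 ⟨hs1, hs2⟩
          have h2 : (0:ℝ) ≤ |c1 - m| := abs_nonneg _
          have h3 : (0:ℝ) ≤ |s| := abs_nonneg _
          nlinarith
      _ < 2 := by norm_num
  have hw0 : w = 0 := by
    by_contra hne
    rcases PACK w hne with h | h <;> linarith
  have h1' : z.1 - m*e.1 - n*f.1 = 0 := by
    have h := congrArg Prod.fst hw0; simpa [hw] using h
  have h2' : z.2 - m*e.2 - n*f.2 = 0 := by
    have h := congrArg Prod.snd hw0; simpa [hw] using h
  constructor
  · have h : z.1 = m*e.1 + n*f.1 := by omega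
    rw [h]; push_cast; ring
  · have h : z.2 = m*e.2 + n*f.2 := by omega
    rw [h]; push_cast; ring

set_option maxHeartbeats 2000000 in
lemma no_mixed (g1 g2 h1 h2 : ℝ) (e f : ℤ × ℤ)
    (COV : ∀ x y : ℝ, ∃ z : ℤ × ℤ, |x - Gf g1 g2 z| ≤ 1 ∧ |y - Gf h1 h2 z| ≤ 1)
    (hbasis : ∀ z : ℤ × ℤ, ∃ m n : ℤ, (z.1 : ℝ) = m * e.1 + n * f.1 ∧ (z.2 : ℝ) = m * e.2 + n * f.2)
    (hGe : Gf g1 g2 e = 2) (hHf : Gf h1 h2 f = 2)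
    (hs0 : 0 < Gf h1 h2 e) (hs1 : Gf h1 h2 e ≤ 1)
    (ht0 : Gf g1 g2 f < 0) (ht1 : -1 ≤ Gf g1 g2 f) : False := by
  set s := Gf h1 h2 e with hs
  set t := Gf g1 g2 f with ht
  obtain ⟨z, hz1, hz2⟩ := COV (1 + t/2) (1 + s/2)
  obtain ⟨m, n, hm, hn⟩ := hbasis z
  have hGz : Gf g1 g2 z = 2*m + n*t := by
    have h : Gf g1 g2 z = m * Gf g1 g2 e + n * Gf g1 g2 f := by
      simp only [Gf]; rw [hm, hn]; ring
    rw [h, hGe, ← ht]; ring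
  have hHz : Gf h1 h2 z = m*s + 2*n := by
    have h : Gf h1 h2 z = m * Gf h1 h2 e + n * Gf h1 h2 f := by
      simp only [Gf]; rw [hm, hn]; ring
    rw [h, hHf, ← hs]; ring
  rw [hGz, abs_le] at hz1
  rw [hHz, abs_le] at hz2
  obtain ⟨h1a, h1b⟩ := hz1
  obtain ⟨h2a, h2b⟩ := hz2
  have htabs : |t| ≤ 1 := abs_le.2 ⟨ht1, by linarith⟩
  have hsabs : |s| ≤ 1 := abs_le.2 ⟨by linarith, hs1⟩
  have hnt : |(n:ℝ)*t| ≤ |(n:ℝ)| := by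
    rw [abs_mul]; exact mul_le_of_le_one_right (abs_nonneg _) htabs
  have hms : |(m:ℝ)*s| ≤ |(m:ℝ)| := by
    rw [abs_mul]; exact mul_le_of_le_one_right (abs_nonneg _) hsabs
  have hnt1 : (n:ℝ)*t ≤ |(n:ℝ)| := le_trans (le_abs_self _) hnt
  have hnt2 : -|(n:ℝ)| ≤ (n:ℝ)*t := by linarith [neg_abs_le ((n:ℝ)*t)]
  have hms1 : (m:ℝ)*s ≤ |(m:ℝ)| := le_trans (le_abs_self _) hms
  have hms2 : -|(m:ℝ)| ≤ (m:ℝ)*s := by linarith [neg_abs_le ((m:ℝ)*s)]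
  have hb1 : 2*(m:ℝ) ≤ 2 + |(n:ℝ)| := by linarith
  have hb2 : -(2*(m:ℝ)) ≤ 1/2 + |(n:ℝ)| := by linarith
  have hb3 : 2*(n:ℝ) ≤ 5/2 + |(m:ℝ)| := by linarith
  have hb4 : -(2*(n:ℝ)) ≤ 1/2 + |(m:ℝ)| := by linarith
  have hmabs : |(m:ℝ)| ≤ 5/2 := by
    have hn' : |(n:ℝ)| ≤ 5/4 + |(m:ℝ)|/2 := by
      rcases abs_cases ((n:ℝ)) with ⟨h, -⟩ | ⟨h, -⟩ <;> rw [h] <;> linarith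
    rcases abs_cases ((m:ℝ)) with ⟨h, -⟩ | ⟨h, -⟩ <;> rw [h] <;> linarith
  have hnabs : |(n:ℝ)| ≤ 5/2 := by
    have hm' : |(m:ℝ)| ≤ 1 + |(n:ℝ)|/2 := by
      rcases abs_cases ((m:ℝ)) with ⟨h, -⟩ | ⟨h, -⟩ <;> rw [h] <;> linarith
    rcases abs_cases ((n:ℝ)) with ⟨h, -⟩ | ⟨h, -⟩ <;> rw [h] <;> linarith
  have hmlo : -2 ≤ m := by
    have h : ((-3 : ℤ) : ℝ) < (m:ℝ) := by push_cast; linarith [neg_abs_le ((m:ℝ))]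
    have h2 : (-3 : ℤ) < m := by exact_mod_cast h
    omega
  have hmhi : m ≤ 2 := by
    have h : (m:ℝ) < ((3 : ℤ) : ℝ) := by push_cast; linarith [le_abs_self ((m:ℝ))]
    have h2 : m < (3 : ℤ) := by exact_mod_cast h
    omega
  have hnlo : -2 ≤ n := by
    have h : ((-3 : ℤ) : ℝ) < (n:ℝ) := by push_cast; linarith [neg_abs_le ((n:ℝ))]
    have h2 : (-3 : ℤ) < n := by exact_mod_cast h
    omega
  have hnhi : n ≤ 2 := by
    have h : (n:ℝ) < ((3 : ℤ) : ℝ) := by push_cast; linarith [le_abs_self ((n:ℝ))]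
    have h2 : n < (3 : ℤ) := by exact_mod_cast h
    omega
  clear hb1 hb2 hb3 hb4 hmabs hnabs hnt hms hnt1 hnt2 hms1 hms2 hGz hHz hm hn
  interval_cases m <;> interval_cases n <;>
    (push_cast at h1a h1b h2a h2b; linarith)

lemma sign_cases (g1 g2 h1 h2 : ℝ) (e f : ℤ × ℤ)
    (PACK : ∀ z : ℤ × ℤ, z ≠ 0 → 2 ≤ |Gf g1 g2 z| ∨ 2 ≤ |Gf h1 h2 z|)
    (COV : ∀ x y : ℝ, ∃ z : ℤ × ℤ, |x - Gf g1 g2 z| ≤ 1 ∧ |y - Gf h1 h2 z| ≤ 1)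
    (hbasis : ∀ z : ℤ × ℤ, ∃ m n : ℤ, (z.1 : ℝ) = m * e.1 + n * f.1 ∧ (z.2 : ℝ) = m * e.2 + n * f.2)
    (hGe : Gf g1 g2 e = 2) (hHe : |Gf h1 h2 e| ≤ 1)
    (hHf : Gf h1 h2 f = 2) (hGf : |Gf g1 g2 f| ≤ 1) :
    Gf h1 h2 e = 0 ∨ Gf g1 g2 f = 0 := by
  obtain ⟨hs1, hs2⟩ := abs_le.1 hHe
  obtain ⟨ht1, ht2⟩ := abs_le.1 hGf
  by_contra hcon
  push_neg at hcon
  obtain ⟨hsne, htne⟩ := hcon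
  rcases lt_or_gt_of_ne hsne with hsneg | hspos <;> rcases lt_or_gt_of_ne htne with htneg | htpos
  · -- s < 0, t < 0 : use e + f
    have hq1 : Gf g1 g2 (e + f) = 2 + Gf g1 g2 f := by
      simp only [Gf, Prod.fst_add, Prod.snd_add]; push_cast; rw [← hGe]; simp only [Gf]; ring
    have hq2 : Gf h1 h2 (e + f) = Gf h1 h2 e + 2 := by
      simp only [Gf, Prod.fst_add, Prod.snd_add]; push_cast; rw [← hHf]; simp only [Gf]; ring
    have hne : e + f ≠ 0 := by
      intro h
      have h0 : Gf g1 g2 (e + f) = 0 := by rw [h, Gf_zero]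
      rw [hq1] at h0; linarith
    rcases PACK _ hne with hc | hc
    · rw [hq1] at hc
      rcases le_abs.1 hc with hc | hc <;> linarith
    · rw [hq2] at hc
      rcases le_abs.1 hc with hc | hc <;> linarith
  · -- s < 0, t > 0 : swapped no_mixed
    refine no_mixed h1 h2 g1 g2 f e ?_ ?_ hHf hGe htpos ht2 hsneg hs1
    · intro x y
      obtain ⟨z, hz1, hz2⟩ := COV y x
      exact ⟨z, hz2, hz1⟩
    · intro z
      obtain ⟨m, n, hm, hn⟩ := hbasis z
      exact ⟨n, m, by rw [hm]; ring, by rw [hn]; ring⟩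
  · -- s > 0, t < 0 : no_mixed
    exact no_mixed g1 g2 h1 h2 e f COV hbasis hGe hHf hspos hs2 htneg ht1
  · -- s > 0, t > 0 : use e - f
    have hq1 : Gf g1 g2 (e - f) = 2 - Gf g1 g2 f := by
      simp only [Gf, Prod.fst_sub, Prod.snd_sub]; push_cast; rw [← hGe]; simp only [Gf]; ring
    have hq2 : Gf h1 h2 (e - f) = Gf h1 h2 e - 2 := by
      simp only [Gf, Prod.fst_sub, Prod.snd_sub]; push_cast; rw [← hHf]; simp only [Gf]; ring
    have hne : e - f ≠ 0 := by
      intro h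
      have h0 : Gf g1 g2 (e - f) = 0 := by rw [h, Gf_zero]
      rw [hq1] at h0; linarith
    rcases PACK _ hne with hc | hc
    · rw [hq1] at hc
      rcases le_abs.1 hc with hc | hc <;> linarith
    · rw [hq2] at hc
      rcases le_abs.1 hc with hc | hc <;> linarith

set_option maxHeartbeats 1000000 in
lemma construct (a b : ℝ × ℝ) (e f : ℤ × ℤ) (t : ℝ)
    (he1 : (e.1 : ℝ) = 2 * a.1) (he2 : (e.2 : ℝ) = 2 * a.2)
    (hf1 : (f.1 : ℝ) = t * a.1 + 2 * b.1) (hf2 : (f.2 : ℝ) = t * a.2 + 2 * b.2)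
    (hbasis : ∀ z : ℤ × ℤ, ∃ m n : ℤ, (z.1 : ℝ) = m * e.1 + n * f.1 ∧ (z.2 : ℝ) = m * e.2 + n * f.2) :
    ∃ (U : Matrix (Fin 2) (Fin 2) ℤ) (α : ℝ), (U.det = 1 ∨ U.det = -1) ∧ 0 ≤ α ∧ α < 1 ∧
      (fun x : ℝ × ℝ => ((U 0 0 : ℝ) * x.1 + (U 0 1 : ℝ) * x.2,
                         (U 1 0 : ℝ) * x.1 + (U 1 1 : ℝ) * x.2)) ''
          (convexHull ℝ ({a + b, a - b, -a + b, -a - b} : Set (ℝ × ℝ))) =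
        (1 / 2 : ℝ) • convexHull ℝ
          ({(-α - 1, 1), (α + 1, -1), (-α + 1, 1), (α - 1, -1)} : Set (ℝ × ℝ)) := by
  classical
  obtain ⟨m, n, hm1, hm2⟩ := hbasis (1, 0)
  obtain ⟨m', n', hm1', hm2'⟩ := hbasis (0, 1)
  have i1 : (1:ℤ) = m * e.1 + n * f.1 := by exact_mod_cast hm1
  have i2 : (0:ℤ) = m * e.2 + n * f.2 := by exact_mod_cast hm2
  have i3 : (0:ℤ) = m' * e.1 + n' * f.1 := by exact_mod_cast hm1'
  have i4 : (1:ℤ) = m' * e.2 + n' * f.2 := by exact_mod_cast hm2'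
  set d : ℤ := e.1 * f.2 - e.2 * f.1 with hd
  have hdet1 : d * (m * n' - m' * n) = 1 := by
    rw [hd]; linear_combination (m'*e.2 + n'*f.2) * i1.symm + i4.symm - (m'*e.1 + n'*f.1) * i2.symm
  have hdu : d = 1 ∨ d = -1 := Int.eq_one_or_neg_one_of_mul_eq_one hdet1
  have hdd : ((d:ℤ):ℝ) * ((d:ℤ):ℝ) = 1 := by rcases hdu with h | h <;> rw [h] <;> norm_num
  have hdE : ((d:ℤ):ℝ) * ((e.1:ℝ) * (f.2:ℝ) - (e.2:ℝ) * (f.1:ℝ)) = 1 := by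
    have : ((d:ℤ):ℝ) = (e.1:ℝ) * (f.2:ℝ) - (e.2:ℝ) * (f.1:ℝ) := by rw [hd]; push_cast; ring
    rw [← this]; exact hdd
  set k : ℤ := ⌊t/2⌋ with hk
  set α : ℝ := t/2 - k with hα
  have hα0 : 0 ≤ α := by rw [hα]; linarith [Int.floor_le (t/2)]
  have hα1 : α < 1 := by rw [hα]; linarith [Int.lt_floor_add_one (t/2)]
  refine ⟨!![d*f.2 - k*(d*e.2), k*(d*e.1) - d*f.1; -(d*e.2), d*e.1], α, ?_, hα0, hα1, ?_⟩
  · have hdet : (!![d*f.2 - k*(d*e.2), k*(d*e.1) - d*f.1; -(d*e.2), d*e.1]).det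
        = d * (d * (e.1*f.2 - e.2*f.1)) := by
      rw [Matrix.det_fin_two_of]; ring
    rw [hdet, ← hd]
    rcases hdu with h | h <;> rw [h] <;> norm_num
  · -- simplify matrix entries
    have hent : ∀ A B C D : ℤ, ((!![A, B; C, D] : Matrix (Fin 2) (Fin 2) ℤ) 0 0 = A)
        ∧ ((!![A, B; C, D]) 0 1 = B) ∧ ((!![A, B; C, D]) 1 0 = C) ∧ ((!![A, B; C, D]) 1 1 = D) := by
      intro A B C D
      refine ⟨?_, ?_, ?_, ?_⟩ <;> simp [Matrix.cons_val_zero, Matrix.cons_val_one, Matrix.head_cons]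
    rw [(hent _ _ _ _).1, (hent _ _ _ _).2.1, (hent _ _ _ _).2.2.1, (hent _ _ _ _).2.2.2]
    set F : ℝ × ℝ → ℝ × ℝ := fun x =>
      (((d*f.2 - k*(d*e.2) : ℤ) : ℝ) * x.1 + ((k*(d*e.1) - d*f.1 : ℤ) : ℝ) * x.2,
       ((-(d*e.2) : ℤ) : ℝ) * x.1 + ((d*e.1 : ℤ) : ℝ) * x.2) with hF
    have hlin : IsLinearMap ℝ F := by
      constructor
      · intro x y; rw [hF]; simp only [Prod.fst_add, Prod.snd_add, Prod.mk_add_mk]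
        rw [Prod.mk.injEq]; constructor <;> ring
      · intro c x; rw [hF]
        simp only [Prod.smul_fst, Prod.smul_snd, Prod.smul_mk, smul_eq_mul]
        rw [Prod.mk.injEq]; constructor <;> ring
    have ha1 : a.1 = (e.1:ℝ)/2 := by linarith
    have ha2 : a.2 = (e.2:ℝ)/2 := by linarith
    have hb1 : b.1 = ((f.1:ℝ) - t*((e.1:ℝ)/2))/2 := by rw [← ha1]; linarith
    have hb2 : b.2 = ((f.2:ℝ) - t*((e.2:ℝ)/2))/2 := by rw [← ha2]; linarith
    have hFa : F a = ((1:ℝ)/2, 0) := by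
      rw [hF]; push_cast
      rw [Prod.ext_iff]
      constructor
      · show _ * a.1 + _ * a.2 = (1:ℝ)/2
        rw [ha1, ha2]
        linear_combination (1/2) * hdE
      · show _ * a.1 + _ * a.2 = (0:ℝ)
        rw [ha1, ha2]; push_cast; ring
    have hFb : F b = (-α/2, (1:ℝ)/2) := by
      rw [hF]; push_cast
      rw [Prod.ext_iff]
      constructor
      · show _ * b.1 + _ * b.2 = -α/2
        rw [hb1, hb2, hα]; push_cast
        linear_combination ((k:ℝ)/2 - t/4) * hdE
      · show _ * b.1 + _ * b.2 = (1:ℝ)/2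
        rw [hb1, hb2]; push_cast
        linear_combination (1/2) * hdE
    have himg := hlin.image_convexHull ({a + b, a - b, -a + b, -a - b} : Set (ℝ × ℝ))
    rw [himg]
    rw [Set.image_insert_eq, Set.image_insert_eq, Set.image_insert_eq, Set.image_singleton]
    have hv1 : F (a + b) = ((1:ℝ)/2) • ((-α + 1, 1) : ℝ × ℝ) := by
      rw [hlin.map_add, hFa, hFb, Prod.smul_mk, smul_eq_mul, smul_eq_mul, Prod.mk_add_mk]
      rw [Prod.mk.injEq]; constructor <;> ring
    have hv2 : F (a - b) = ((1:ℝ)/2) • ((α + 1, -1) : ℝ × ℝ) := by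
      rw [hlin.map_sub, hFa, hFb, Prod.smul_mk, smul_eq_mul, smul_eq_mul, Prod.mk_sub_mk]
      rw [Prod.mk.injEq]; constructor <;> ring
    have hv3 : F (-a + b) = ((1:ℝ)/2) • ((-α - 1, 1) : ℝ × ℝ) := by
      rw [hlin.map_add, hlin.map_neg, hFa, hFb, Prod.smul_mk, smul_eq_mul, smul_eq_mul]
      rw [Prod.neg_mk, Prod.mk_add_mk, Prod.mk.injEq]; constructor <;> ring
    have hv4 : F (-a - b) = ((1:ℝ)/2) • ((α - 1, -1) : ℝ × ℝ) := by
      rw [hlin.map_sub, hlin.map_neg, hFa, hFb, Prod.smul_mk, smul_eq_mul, smul_eq_mul]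
      rw [Prod.neg_mk, Prod.mk_sub_mk, Prod.mk.injEq]; constructor <;> ring
    rw [hv1, hv2, hv3, hv4]
    rw [← convexHull_smul]
    congr 1
    rw [Set.smul_set_insert, Set.smul_set_insert, Set.smul_set_insert, Set.smul_set_singleton]
    ext x
    simp only [Set.mem_insert_iff, Set.mem_singleton_iff]
    tauto

end ParTile


theorem parallelogram_tiling (a b : ℝ × ℝ) (hab : LinearIndependent ℝ ![a, b])
    (P : Set (ℝ × ℝ))
    (hP : P = convexHull ℝ ({a + b, a - b, -a + b, -a - b} : Set (ℝ × ℝ)))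
    (hdisj : ∀ z z' : ℤ × ℤ, z ≠ z' →
      interior ((fun x => x + ((z.1 : ℝ), (z.2 : ℝ))) '' P) ∩
        interior ((fun x => x + ((z'.1 : ℝ), (z'.2 : ℝ))) '' P) = ∅)
    (hcover : (⋃ z : ℤ × ℤ, (fun x => x + ((z.1 : ℝ), (z.2 : ℝ))) '' P) = Set.univ) :
    ∃ (U : Matrix (Fin 2) (Fin 2) ℤ) (α : ℝ), (U.det = 1 ∨ U.det = -1) ∧ 0 ≤ α ∧ α < 1 ∧
      (fun x : ℝ × ℝ => ((U 0 0 : ℝ) * x.1 + (U 0 1 : ℝ) * x.2,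
                         (U 1 0 : ℝ) * x.1 + (U 1 1 : ℝ) * x.2)) '' P =
        (1 / 2 : ℝ) • convexHull ℝ
          ({(-α - 1, 1), (α + 1, -1), (-α + 1, 1), (α - 1, -1)} : Set (ℝ × ℝ)) := by
  classical
  rw [linearIndependent_fin2] at hab
  obtain ⟨hb0, hca⟩ := hab
  simp only [Matrix.cons_val_one, Matrix.head_cons, Matrix.cons_val_zero] at hb0 hca
  set D : ℝ := a.1 * b.2 - a.2 * b.1 with hDdef
  have hD : D ≠ 0 := by
    intro h0
    have hD0 : a.1 * b.2 = a.2 * b.1 := by rw [hDdef] at h0; linarith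
    have hb12 : b.1 ≠ 0 ∨ b.2 ≠ 0 := by
      by_contra hc; push_neg at hc
      exact hb0 (Prod.ext_iff.mpr ⟨by simpa using hc.1, by simpa using hc.2⟩)
    rcases hb12 with h | h
    · refine hca (a.1 / b.1) (Prod.ext_iff.mpr ⟨?_, ?_⟩)
      · simp only [Prod.smul_fst, smul_eq_mul]; field_simp
      · simp only [Prod.smul_snd, smul_eq_mul]; field_simp; linarith [hD0]
    · refine hca (a.2 / b.2) (Prod.ext_iff.mpr ⟨?_, ?_⟩)
      · simp only [Prod.smul_fst, smul_eq_mul]; field_simp; linarith [hD0]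
      · simp only [Prod.smul_snd, smul_eq_mul]; field_simp
  set ps : ℝ × ℝ → ℝ := fun x => (x.1 * b.2 - x.2 * b.1) / D with hps
  set ph : ℝ × ℝ → ℝ := fun x => (a.1 * x.2 - a.2 * x.1) / D with hph
  have hrep : ∀ x : ℝ × ℝ, x.1 = ps x * a.1 + ph x * b.1 ∧ x.2 = ps x * a.2 + ph x * b.2 := by
    intro x
    simp only [hps, hph]
    constructor <;> (field_simp; ring)
  -- vertex values
  have hv_ps : ps (a + b) = 1 ∧ ps (a - b) = 1 ∧ ps (-a + b) = -1 ∧ ps (-a - b) = -1 := by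
    refine ⟨?_, ?_, ?_, ?_⟩ <;>
      (simp only [hps, Prod.fst_add, Prod.snd_add, Prod.fst_sub, Prod.snd_sub,
        Prod.fst_neg, Prod.snd_neg]; rw [div_eq_iff hD, hDdef]; ring)
  have hv_ph : ph (a + b) = 1 ∧ ph (a - b) = -1 ∧ ph (-a + b) = 1 ∧ ph (-a - b) = -1 := by
    refine ⟨?_, ?_, ?_, ?_⟩ <;>
      (simp only [hph, Prod.fst_add, Prod.snd_add, Prod.fst_sub, Prod.snd_sub,
        Prod.fst_neg, Prod.snd_neg]; rw [div_eq_iff hD, hDdef]; ring)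
  -- P is contained in the box
  have hPsub : P ⊆ {x : ℝ × ℝ | |ps x| ≤ 1 ∧ |ph x| ≤ 1} := by
    rw [hP]
    apply convexHull_min
    · intro v hv
      simp only [Set.mem_insert_iff, Set.mem_singleton_iff] at hv
      rcases hv with rfl | rfl | rfl | rfl <;>
        constructor <;>
          simp only [Set.mem_setOf_eq, hv_ps.1, hv_ps.2.1, hv_ps.2.2.1, hv_ps.2.2.2,
            hv_ph.1, hv_ph.2.1, hv_ph.2.2.1, hv_ph.2.2.2] <;> norm_num
    · intro x hx y hy c c' hc hc' hcc
      simp only [Set.mem_setOf_eq] at hx hy ⊢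
      have hpsl : ps (c • x + c' • y) = c * ps x + c' * ps y := by
        simp only [hps, Prod.fst_add, Prod.snd_add, Prod.smul_fst, Prod.smul_snd, smul_eq_mul]
        field_simp; ring
      have hphl : ph (c • x + c' • y) = c * ph x + c' * ph y := by
        simp only [hph, Prod.fst_add, Prod.snd_add, Prod.smul_fst, Prod.smul_snd, smul_eq_mul]
        field_simp; ring
      constructor
      · rw [hpsl]
        calc |c * ps x + c' * ps y| ≤ |c * ps x| + |c' * ps y| := abs_add_le _ _
          _ = c * |ps x| + c' * |ps y| := by
              rw [abs_mul, abs_mul, abs_of_nonneg hc, abs_of_nonneg hc']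
          _ ≤ c * 1 + c' * 1 := by
              have := hx.1; have := hy.1
              have h1 := mul_le_mul_of_nonneg_left hx.1 hc
              have h2 := mul_le_mul_of_nonneg_left hy.1 hc'
              linarith
          _ = 1 := by linarith
      · rw [hphl]
        calc |c * ph x + c' * ph y| ≤ |c * ph x| + |c' * ph y| := abs_add_le _ _
          _ = c * |ph x| + c' * |ph y| := by
              rw [abs_mul, abs_mul, abs_of_nonneg hc, abs_of_nonneg hc']
          _ ≤ c * 1 + c' * 1 := by
              have h1 := mul_le_mul_of_nonneg_left hx.2 hc
              have h2 := mul_le_mul_of_nonneg_left hy.2 hc'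
              linarith
          _ = 1 := by linarith
  -- box is contained in P
  have hsubP : ∀ x : ℝ × ℝ, |ps x| ≤ 1 → |ph x| ≤ 1 → x ∈ P := by
    intro x hx1 hx2
    rw [hP]
    obtain ⟨hp1, hp2⟩ := abs_le.1 hx1
    obtain ⟨hq1, hq2⟩ := abs_le.1 hx2
    have hxrep : x = ps x • a + ph x • b := by
      obtain ⟨h1, h2⟩ := hrep x
      refine Prod.ext_iff.mpr ⟨?_, ?_⟩ <;>
        simp only [Prod.fst_add, Prod.snd_add, Prod.smul_fst, Prod.smul_snd, smul_eq_mul] <;>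
        [exact h1; exact h2]
    have hCconv : Convex ℝ (convexHull ℝ ({a + b, a - b, -a + b, -a - b} : Set (ℝ × ℝ))) :=
      convex_convexHull ℝ _
    have hm1 : a + b ∈ convexHull ℝ ({a + b, a - b, -a + b, -a - b} : Set (ℝ × ℝ)) :=
      subset_convexHull ℝ _ (by simp)
    have hm2 : a - b ∈ convexHull ℝ ({a + b, a - b, -a + b, -a - b} : Set (ℝ × ℝ)) :=
      subset_convexHull ℝ _ (by simp)
    have hm3 : -a + b ∈ convexHull ℝ ({a + b, a - b, -a + b, -a - b} : Set (ℝ × ℝ)) :=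
      subset_convexHull ℝ _ (by simp)
    have hm4 : -a - b ∈ convexHull ℝ ({a + b, a - b, -a + b, -a - b} : Set (ℝ × ℝ)) :=
      subset_convexHull ℝ _ (by simp)
    have hplus : ps x • a + b ∈ convexHull ℝ ({a + b, a - b, -a + b, -a - b} : Set (ℝ × ℝ)) := by
      have heq : ps x • a + b = ((1 + ps x)/2) • (a + b) + ((1 - ps x)/2) • (-a + b) := by
        module
      rw [heq]
      exact hCconv hm1 hm3 (by linarith) (by linarith) (by ring)
    have hminus : ps x • a - b ∈ convexHull ℝ ({a + b, a - b, -a + b, -a - b} : Set (ℝ × ℝ)) := by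
      have heq : ps x • a - b = ((1 + ps x)/2) • (a - b) + ((1 - ps x)/2) • (-a - b) := by
        module
      rw [heq]
      exact hCconv hm2 hm4 (by linarith) (by linarith) (by ring)
    have hxeq : x = ((1 + ph x)/2) • (ps x • a + b) + ((1 - ph x)/2) • (ps x • a - b) := by
      refine hxrep.trans ?_
      module
    rw [hxeq]
    exact hCconv hplus hminus (by linarith) (by linarith) (by ring)
  -- interior
  have hOopen : IsOpen {x : ℝ × ℝ | |ps x| < 1 ∧ |ph x| < 1} := by
    have hcps : Continuous ps := by rw [hps]; fun_prop
    have hcph : Continuous ph := by rw [hph]; fun_prop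
    have hOeq : {x : ℝ × ℝ | |ps x| < 1 ∧ |ph x| < 1}
        = ps ⁻¹' (Set.Ioo (-1) 1) ∩ ph ⁻¹' (Set.Ioo (-1) 1) := by
      ext x; simp [Set.mem_Ioo, abs_lt]
    rw [hOeq]
    exact (isOpen_Ioo.preimage hcps).inter (isOpen_Ioo.preimage hcph)
  have hint : ∀ x : ℝ × ℝ, |ps x| < 1 → |ph x| < 1 → x ∈ interior P := by
    intro x h1 h2
    exact interior_maximal (fun y hy => hsubP y hy.1.le hy.2.le) hOopen ⟨h1, h2⟩
  -- the lattice functionals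
  set q1 : ℝ := b.2 / D with hq1
  set q2 : ℝ := -b.1 / D with hq2
  set r1 : ℝ := -a.2 / D with hr1
  set r2 : ℝ := a.1 / D with hr2
  have hGps : ∀ z : ℤ × ℤ, ParTile.Gf q1 q2 z = ps ((z.1 : ℝ), (z.2 : ℝ)) := by
    intro z
    simp only [ParTile.Gf, hps, hq1, hq2]
    field_simp
    ring
  have hGph : ∀ z : ℤ × ℤ, ParTile.Gf r1 r2 z = ph ((z.1 : ℝ), (z.2 : ℝ)) := by
    intro z
    simp only [ParTile.Gf, hph, hr1, hr2]
    field_simp; ring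
  have htrans : ∀ (c y : ℝ × ℝ), y ∈ interior P → y + c ∈ interior ((fun x => x + c) '' P) := by
    intro c y hy
    have hopen : IsOpenMap (fun x : ℝ × ℝ => x + c) := (Homeomorph.addRight c).isOpenMap
    exact hopen.image_interior_subset P ⟨y, hy, rfl⟩
  have PACK : ∀ z : ℤ × ℤ, z ≠ 0 → 2 ≤ |ParTile.Gf q1 q2 z| ∨ 2 ≤ |ParTile.Gf r1 r2 z| := by
    intro z hz
    by_contra hcon
    push_neg at hcon
    obtain ⟨hlt1, hlt2⟩ := hcon
    rw [hGps] at hlt1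
    rw [hGph] at hlt2
    have hhalf1 : ps (((1:ℝ)/2) • ((z.1 : ℝ), (z.2 : ℝ))) = ps ((z.1 : ℝ), (z.2 : ℝ)) / 2 := by
      simp only [hps, Prod.smul_fst, Prod.smul_snd, smul_eq_mul]; ring
    have hhalf2 : ph (((1:ℝ)/2) • ((z.1 : ℝ), (z.2 : ℝ))) = ph ((z.1 : ℝ), (z.2 : ℝ)) / 2 := by
      simp only [hph, Prod.smul_fst, Prod.smul_snd, smul_eq_mul]; ring
    have hhalf1' : ps ((-(1:ℝ)/2) • ((z.1 : ℝ), (z.2 : ℝ))) = -(ps ((z.1 : ℝ), (z.2 : ℝ)) / 2) := by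
      simp only [hps, Prod.smul_fst, Prod.smul_snd, smul_eq_mul]; ring
    have hhalf2' : ph ((-(1:ℝ)/2) • ((z.1 : ℝ), (z.2 : ℝ))) = -(ph ((z.1 : ℝ), (z.2 : ℝ)) / 2) := by
      simp only [hph, Prod.smul_fst, Prod.smul_snd, smul_eq_mul]; ring
    have hmem1 : ((1:ℝ)/2) • ((z.1 : ℝ), (z.2 : ℝ)) ∈ interior P := by
      apply hint
      · rw [hhalf1, abs_div]; simp only [abs_two]; norm_num; linarith [abs_nonneg (ps ((z.1:ℝ), (z.2:ℝ)))]
      · rw [hhalf2, abs_div]; simp only [abs_two]; norm_num; linarith [abs_nonneg (ph ((z.1:ℝ), (z.2:ℝ)))]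
    have hmem2 : ((-(1:ℝ))/2) • ((z.1 : ℝ), (z.2 : ℝ)) ∈ interior P := by
      apply hint
      · rw [hhalf1', abs_neg, abs_div]; simp only [abs_two]; norm_num; linarith [abs_nonneg (ps ((z.1:ℝ), (z.2:ℝ)))]
      · rw [hhalf2', abs_neg, abs_div]; simp only [abs_two]; norm_num; linarith [abs_nonneg (ph ((z.1:ℝ), (z.2:ℝ)))]
    have hds := hdisj z 0 hz
    have hin1 : ((1:ℝ)/2) • ((z.1 : ℝ), (z.2 : ℝ)) ∈
        interior ((fun x => x + ((z.1 : ℝ), (z.2 : ℝ))) '' P) := by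
      have heq : ((1:ℝ)/2) • ((z.1 : ℝ), (z.2 : ℝ))
          = ((-(1:ℝ))/2) • ((z.1 : ℝ), (z.2 : ℝ)) + ((z.1 : ℝ), (z.2 : ℝ)) := by
        module
      rw [heq]
      exact htrans _ _ hmem2
    have hin2 : ((1:ℝ)/2) • ((z.1 : ℝ), (z.2 : ℝ)) ∈
        interior ((fun x => x + (((0:ℤ×ℤ).1 : ℝ), ((0:ℤ×ℤ).2 : ℝ))) '' P) := by
      have h0 : (((0:ℤ×ℤ).1 : ℝ), ((0:ℤ×ℤ).2 : ℝ)) = (0 : ℝ × ℝ) := by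
        simp [Prod.ext_iff]
      have heq : ((1:ℝ)/2) • ((z.1 : ℝ), (z.2 : ℝ))
          = ((1:ℝ)/2) • ((z.1 : ℝ), (z.2 : ℝ)) + (((0:ℤ×ℤ).1 : ℝ), ((0:ℤ×ℤ).2 : ℝ)) := by
        rw [h0, add_zero]
      rw [heq]
      exact htrans _ _ hmem1
    have : ((1:ℝ)/2) • ((z.1 : ℝ), (z.2 : ℝ)) ∈ (∅ : Set (ℝ × ℝ)) := by
      rw [← hds]; exact ⟨hin1, hin2⟩
    simpa using this
  have COV : ∀ x y : ℝ, ∃ z : ℤ × ℤ,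
      |x - ParTile.Gf q1 q2 z| ≤ 1 ∧ |y - ParTile.Gf r1 r2 z| ≤ 1 := by
    intro x y
    have hp : x • a + y • b ∈ ⋃ z : ℤ × ℤ, (fun w => w + ((z.1 : ℝ), (z.2 : ℝ))) '' P := by
      rw [hcover]; trivial
    obtain ⟨z, w, hwP, hweq⟩ := Set.mem_iUnion.1 hp
    refine ⟨z, ?_, ?_⟩
    · have hweq' : w + ((z.1 : ℝ), (z.2 : ℝ)) = x • a + y • b := hweq
      have hw : w = x • a + y • b - ((z.1 : ℝ), (z.2 : ℝ)) := by
        rw [← hweq']; exact (add_sub_cancel_right _ _).symm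
      have hval : ps w = x - ps ((z.1 : ℝ), (z.2 : ℝ)) := by
        rw [hw]
        simp only [hps, Prod.fst_sub, Prod.snd_sub, Prod.fst_add, Prod.snd_add,
          Prod.smul_fst, Prod.smul_snd, smul_eq_mul]
        rw [div_eq_iff hD, sub_mul (x) _ D, div_mul_cancel₀ _ hD, hDdef]; ring
      have := (hPsub hwP).1
      rw [hval] at this
      rw [hGps]
      exact this
    · have hweq' : w + ((z.1 : ℝ), (z.2 : ℝ)) = x • a + y • b := hweq
      have hw : w = x • a + y • b - ((z.1 : ℝ), (z.2 : ℝ)) := by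
        rw [← hweq']; exact (add_sub_cancel_right _ _).symm
      have hval : ph w = y - ph ((z.1 : ℝ), (z.2 : ℝ)) := by
        rw [hw]
        simp only [hph, Prod.fst_sub, Prod.snd_sub, Prod.fst_add, Prod.snd_add,
          Prod.smul_fst, Prod.smul_snd, smul_eq_mul]
        rw [div_eq_iff hD, sub_mul (y) _ D, div_mul_cancel₀ _ hD, hDdef]; ring
      have := (hPsub hwP).2
      rw [hval] at this
      rw [hGph]
      exact this
  have FIN : Set.Finite {z : ℤ × ℤ | |ParTile.Gf q1 q2 z| ≤ 4 ∧ |ParTile.Gf r1 r2 z| ≤ 4} := by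
    set M : ℝ := 4*(|a.1| + |b.1|) + 4*(|a.2| + |b.2|) with hM
    set N : ℤ := ⌈M⌉ with hN
    apply Set.Finite.subset (Set.finite_Icc ((-N, -N) : ℤ × ℤ) (N, N))
    intro z hz
    obtain ⟨h1z, h2z⟩ := hz
    rw [hGps] at h1z
    rw [hGph] at h2z
    obtain ⟨hc1, hc2⟩ := hrep ((z.1 : ℝ), (z.2 : ℝ))
    have habs1 : |(z.1 : ℝ)| ≤ M := by
      rw [show ((z.1 : ℝ), (z.2 : ℝ)).1 = (z.1 : ℝ) from rfl] at hc1
      rw [hc1]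
      calc |ps ((z.1:ℝ), (z.2:ℝ)) * a.1 + ph ((z.1:ℝ), (z.2:ℝ)) * b.1|
          ≤ |ps ((z.1:ℝ), (z.2:ℝ))| * |a.1| + |ph ((z.1:ℝ), (z.2:ℝ))| * |b.1| := by
            refine (abs_add_le _ _).trans ?_
            rw [abs_mul, abs_mul]
        _ ≤ 4 * |a.1| + 4 * |b.1| := by
            have := abs_nonneg a.1; have := abs_nonneg b.1
            have h1 := mul_le_mul_of_nonneg_right h1z (abs_nonneg a.1)
            have h2 := mul_le_mul_of_nonneg_right h2z (abs_nonneg b.1)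
            linarith
        _ ≤ M := by rw [hM]; have := abs_nonneg a.2; have := abs_nonneg b.2; linarith
    have habs2 : |(z.2 : ℝ)| ≤ M := by
      rw [show ((z.1 : ℝ), (z.2 : ℝ)).2 = (z.2 : ℝ) from rfl] at hc2
      rw [hc2]
      calc |ps ((z.1:ℝ), (z.2:ℝ)) * a.2 + ph ((z.1:ℝ), (z.2:ℝ)) * b.2|
          ≤ |ps ((z.1:ℝ), (z.2:ℝ))| * |a.2| + |ph ((z.1:ℝ), (z.2:ℝ))| * |b.2| := by
            refine (abs_add_le _ _).trans ?_
            rw [abs_mul, abs_mul]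
        _ ≤ 4 * |a.2| + 4 * |b.2| := by
            have h1 := mul_le_mul_of_nonneg_right h1z (abs_nonneg a.2)
            have h2 := mul_le_mul_of_nonneg_right h2z (abs_nonneg b.2)
            linarith
        _ ≤ M := by rw [hM]; have := abs_nonneg a.1; have := abs_nonneg b.1; linarith
    have hMN : M ≤ (N : ℝ) := by rw [hN]; exact Int.le_ceil M
    obtain ⟨ha1, ha2⟩ := abs_le.1 habs1
    obtain ⟨hb1, hb2⟩ := abs_le.1 habs2
    constructor
    · constructor
      · exact_mod_cast (by push_cast; linarith : ((-N : ℤ) : ℝ) ≤ (z.1 : ℝ))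
      · exact_mod_cast (by push_cast; linarith : ((-N : ℤ) : ℝ) ≤ (z.2 : ℝ))
    · constructor
      · exact_mod_cast (by linarith : (z.1 : ℝ) ≤ ((N : ℤ) : ℝ))
      · exact_mod_cast (by linarith : (z.2 : ℝ) ≤ ((N : ℤ) : ℝ))
  -- extract the basis vectors
  obtain ⟨e, hGe, hHe⟩ := ParTile.extract q1 q2 r1 r2 PACK COV FIN
  obtain ⟨f, hHf, hGf⟩ := ParTile.extract r1 r2 q1 q2
    (fun z hz => (PACK z hz).symm)
    (fun x y => by obtain ⟨z, h1, h2⟩ := COV y x; exact ⟨z, h2, h1⟩)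
    (Set.Finite.subset FIN (fun z hz => ⟨hz.2, hz.1⟩))
  have hbasis := ParTile.basis_of_ef q1 q2 r1 r2 e f PACK hGe hHe hHf hGf
  have hsign := ParTile.sign_cases q1 q2 r1 r2 e f PACK COV hbasis hGe hHe hHf hGf
  rcases hsign with hs0 | ht0
  · -- Gf r1 r2 e = 0 : e = 2a
    have hps_e : ps ((e.1 : ℝ), (e.2 : ℝ)) = 2 := by rw [← hGps e]; exact hGe
    have hph_e : ph ((e.1 : ℝ), (e.2 : ℝ)) = 0 := by rw [← hGph e]; exact hs0
    have hps_f : ps ((f.1 : ℝ), (f.2 : ℝ)) = ParTile.Gf q1 q2 f := (hGps f).symm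
    have hph_f : ph ((f.1 : ℝ), (f.2 : ℝ)) = 2 := by rw [← hGph f]; exact hHf
    obtain ⟨he1, he2⟩ := hrep ((e.1 : ℝ), (e.2 : ℝ))
    obtain ⟨hf1, hf2⟩ := hrep ((f.1 : ℝ), (f.2 : ℝ))
    rw [hps_e, hph_e] at he1 he2
    rw [hps_f, hph_f] at hf1 hf2
    have he1' : (e.1 : ℝ) = 2 * a.1 := by simpa using he1
    have he2' : (e.2 : ℝ) = 2 * a.2 := by simpa using he2
    have hf1' : (f.1 : ℝ) = ParTile.Gf q1 q2 f * a.1 + 2 * b.1 := by simpa using hf1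
    have hf2' : (f.2 : ℝ) = ParTile.Gf q1 q2 f * a.2 + 2 * b.2 := by simpa using hf2
    have := ParTile.construct a b e f (ParTile.Gf q1 q2 f) he1' he2' hf1' hf2' hbasis
    rw [hP]
    exact this
  · -- Gf q1 q2 f = 0 : f = 2b
    have hps_f : ps ((f.1 : ℝ), (f.2 : ℝ)) = 0 := by rw [← hGps f]; exact ht0
    have hph_f : ph ((f.1 : ℝ), (f.2 : ℝ)) = 2 := by rw [← hGph f]; exact hHf
    have hps_e : ps ((e.1 : ℝ), (e.2 : ℝ)) = 2 := by rw [← hGps e]; exact hGe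
    have hph_e : ph ((e.1 : ℝ), (e.2 : ℝ)) = ParTile.Gf r1 r2 e := (hGph e).symm
    obtain ⟨he1, he2⟩ := hrep ((e.1 : ℝ), (e.2 : ℝ))
    obtain ⟨hf1, hf2⟩ := hrep ((f.1 : ℝ), (f.2 : ℝ))
    rw [hps_e, hph_e] at he1 he2
    rw [hps_f, hph_f] at hf1 hf2
    have hf1' : (f.1 : ℝ) = 2 * b.1 := by simpa using hf1
    have hf2' : (f.2 : ℝ) = 2 * b.2 := by simpa using hf2
    have he1' : (e.1 : ℝ) = ParTile.Gf r1 r2 e * b.1 + 2 * a.1 := by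
      have h : (e.1 : ℝ) = 2 * a.1 + ParTile.Gf r1 r2 e * b.1 := he1
      linarith
    have he2' : (e.2 : ℝ) = ParTile.Gf r1 r2 e * b.2 + 2 * a.2 := by
      have h : (e.2 : ℝ) = 2 * a.2 + ParTile.Gf r1 r2 e * b.2 := he2
      linarith
    have hbasis' : ∀ z : ℤ × ℤ, ∃ m n : ℤ,
        (z.1 : ℝ) = m * f.1 + n * e.1 ∧ (z.2 : ℝ) = m * f.2 + n * e.2 := by
      intro z
      obtain ⟨m, n, h1, h2⟩ := hbasis z
      exact ⟨n, m, by rw [h1]; ring, by rw [h2]; ring⟩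
    have hcon := ParTile.construct b a f e (ParTile.Gf r1 r2 e) hf1' hf2' he1' he2' hbasis'
    have hsets : ({a + b, a - b, -a + b, -a - b} : Set (ℝ × ℝ))
        = ({b + a, b - a, -b + a, -b - a} : Set (ℝ × ℝ)) := by
      rw [add_comm b a, sub_eq_neg_add b a, neg_add_eq_sub b a,
        show -b - a = -a - b from by abel]
      exact (congrArg (insert (a + b)) (Set.insert_comm _ _ _)).symm
    rw [hP, hsets]
    exact hcon
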